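/- arXiv:1410.7976 — 2 statements merged into one kernel-verified Lean document; each statement's English description precedes it below -/
import Mathlib

section
/- For every m ∈ ℕ and every j with 1 ≤ j ≤ 2^m − 1, the Walsh-Dirichlet kernels satisfy D_{2^m − j}(x) = D_{2^m}(x) − w_{2^m−1}(x) · D_j(x) for all x ∈ G. -/
open Finset

/-- The dyadic (Walsh) group `G = ∏_{k ∈ ℕ} ℤ₂` with coordinatewise mod-2 addition. -/
abbrev G : Type := ℕ → ZMod 2

/-- The Walsh function `w_n(x) = ∏_k r_k(x)^{n_k} = (-1)^{Σ_k n_k x_k}`,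
where `n = Σ_k n_k 2^k` in binary and `r_k(x) = (-1)^{x_k}`. -/
noncomputable def walsh (n : ℕ) (x : G) : ℝ :=
  (-1 : ℝ) ^ (∑ k ∈ Finset.range n.size, (n.testBit k).toNat * (x k).val)

/-- The Walsh–Dirichlet kernel `D_n = Σ_{i=0}^{n-1} w_i` (so `D_0 = 0`). -/
noncomputable def dirichlet (n : ℕ) (x : G) : ℝ :=
  ∑ i ∈ Finset.range n, walsh i x

lemma walsh_ext (n M : ℕ) (h : n < 2 ^ M) (x : G) :
    walsh n x = (-1 : ℝ) ^ (∑ k ∈ Finset.range M, (n.testBit k).toNat * (x k).val) := by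
  unfold walsh
  congr 1
  apply Finset.sum_subset
  · intro k hk
    simp only [Finset.mem_range] at *
    exact lt_of_lt_of_le hk (Nat.size_le.mpr h)
  · intro k _ hk
    simp only [Finset.mem_range, not_lt] at hk
    rw [Nat.testBit_eq_false_of_lt (lt_of_lt_of_le (Nat.lt_size_self n) (Nat.pow_le_pow_right (by norm_num) hk))]
    simp

lemma walsh_compl (m i : ℕ) (hi : i < 2 ^ m) (x : G) :
    walsh (2 ^ m - 1 - i) x = walsh (2 ^ m - 1) x * walsh i x := by
  have h1 : 2 ^ m - 1 - i < 2 ^ m := by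
    have := Nat.one_le_two_pow (n := m); omega
  have h2 : 2 ^ m - 1 < 2 ^ m := by
    have := Nat.one_le_two_pow (n := m); omega
  rw [walsh_ext _ m h1 x, walsh_ext _ m h2 x, walsh_ext _ m hi x, ← pow_add]
  have hsub : 2 ^ m - 1 - i = 2 ^ m - (i + 1) := by omega
  have hneg : ((-1 : ℝ) ^ 2) = 1 := by norm_num
  rw [← Finset.sum_add_distrib]
  have key : ∑ k ∈ Finset.range m, (((2 ^ m - 1).testBit k).toNat * (x k).val + (i.testBit k).toNat * (x k).val)
      = ∑ k ∈ Finset.range m, ((2 ^ m - 1 - i).testBit k).toNat * (x k).val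
        + 2 * ∑ k ∈ Finset.range m, ((i.testBit k).toNat * (x k).val) := by
    rw [Finset.mul_sum, ← Finset.sum_add_distrib]
    apply Finset.sum_congr rfl
    intro k hk
    simp only [Finset.mem_range] at hk
    rw [hsub, Nat.testBit_two_pow_sub_succ hi, Nat.testBit_two_pow_sub_one]
    cases htb : i.testBit k <;> simp [hk, htb] <;> ring
  rw [key, pow_add, pow_mul, hneg, one_pow, mul_one]

/-- For `1 ≤ j ≤ 2^m − 1`, `D_{2^m − j} = D_{2^m} − w_{2^m−1} · D_j`. -/
theorem dirichlet_two_pow_sub (m j : ℕ) (hj1 : 1 ≤ j) (hj2 : j ≤ 2 ^ m - 1) (x : G) :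
    dirichlet (2 ^ m - j) x = dirichlet (2 ^ m) x - walsh (2 ^ m - 1) x * dirichlet j x := by
  have hpow : 1 ≤ 2 ^ m := Nat.one_le_two_pow
  have hle : 2 ^ m - j ≤ 2 ^ m := by omega
  unfold dirichlet
  rw [eq_sub_iff_add_eq, Finset.mul_sum,
    ← Finset.sum_range_add_sum_Ico (fun i => walsh i x) hle]
  congr 1
  have : ∀ i ∈ Finset.range j, walsh (2 ^ m - 1) x * walsh i x
      = walsh (2 ^ m - 1 - i) x := fun i hi => (walsh_compl m i (by
        simp only [Finset.mem_range] at hi; omega) x).symm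
  rw [Finset.sum_congr rfl this, ← Finset.sum_range_reflect]
  rw [Finset.sum_Ico_eq_sum_range, show 2 ^ m - (2 ^ m - j) = j by omega]
  apply Finset.sum_congr rfl
  intro i hi
  simp only [Finset.mem_range] at hi
  congr 1
  omega
end

section
/- Let (q_k)_{k≥0} be a non-decreasing sequence of nonnegative reals with q_0 > 0 and Q_n := Σ_{k=0}^{n-1} q_k. Then for all n ≥ 1 and elements S_1,…,S_n of a normed space, the Nörlund mean t_n = Q_n^{-1} Σ_{k=1}^n q_{n-k} S_k satisfies ‖t_n‖ ≤ c · sup_{1≤j≤n} ‖σ_j‖ for an absolute constant c (in fact c = 2 works), where σ_j = j^{-1} Σ_{k=1}^j S_k. -/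
open Finset

/-- Telescoping identity: `∑_{j<m} (q(j+1)-q j)·(m-j) = ∑_{k<m+1} q k - (m+1)·q 0`. -/
lemma norlund_key (q : ℕ → ℝ) (m : ℕ) :
    ∑ j ∈ Finset.range m, (q (j + 1) - q j) * ((m - j : ℕ) : ℝ) =
      ∑ k ∈ Finset.range (m + 1), q k - (m + 1) * q 0 := by
  induction m with
  | zero => simp
  | succ m ih =>
    rw [Finset.sum_range_succ]
    have h1 : ∀ j ∈ Finset.range m,
        (q (j + 1) - q j) * ((m + 1 - j : ℕ) : ℝ)
          = (q (j + 1) - q j) * ((m - j : ℕ) : ℝ) + (q (j + 1) - q j) := by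
      intro j hj
      have hj' : j < m := Finset.mem_range.mp hj
      have : (m + 1 - j : ℕ) = (m - j) + 1 := by omega
      rw [this]
      push_cast
      ring
    rw [Finset.sum_congr rfl h1, Finset.sum_add_distrib, ih, Finset.sum_range_sub q m,
      Finset.sum_range_succ (f := q) (n := m + 1), show m + 1 - m = 1 from by omega]
    push_cast
    ring

/-- For a non-decreasing nonnegative sequence `q` with `q 0 > 0`, the Nörlund mean
satisfies `‖t_n‖ ≤ 2 · sup_{1≤j≤n} ‖σ_j‖`. -/
theorem norlund_bound_of_monotone (V : Type*) [NormedAddCommGroup V] [NormedSpace ℝ V]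
    (q : ℕ → ℝ) (hnn : ∀ k, 0 ≤ q k) (hq0 : 0 < q 0) (hmono : Monotone q)
    (S : ℕ → V) (n : ℕ) (hn : 1 ≤ n) :
    ‖(∑ k ∈ Finset.range n, q k)⁻¹ • ∑ k ∈ Finset.Icc 1 n, q (n - k) • S k‖ ≤
      2 * (Finset.Icc 1 n).sup' (Finset.nonempty_Icc.mpr hn)
            (fun j => ‖(j : ℝ)⁻¹ • ∑ k ∈ Finset.Icc 1 j, S k‖) := by
  set M := (Finset.Icc 1 n).sup' (Finset.nonempty_Icc.mpr hn)
      (fun j => ‖(j : ℝ)⁻¹ • ∑ k ∈ Finset.Icc 1 j, S k‖) with hM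
  have hne := Finset.nonempty_Icc.mpr hn
  have hMnonneg : 0 ≤ M := by
    obtain ⟨j, hj⟩ := hne
    exact le_trans (norm_nonneg _)
      (Finset.le_sup' (fun j : ℕ => ‖(j : ℝ)⁻¹ • ∑ k ∈ Finset.Icc 1 j, S k‖) hj)
  -- T j = partial sums
  set T : ℕ → V := fun m => ∑ j ∈ Finset.range m, S (1 + j) with hT
  have hTIcc : ∀ m : ℕ, T m = ∑ k ∈ Finset.Icc 1 m, S k := by
    intro m
    rw [hT, show Finset.Icc 1 m = Finset.Ico 1 (m + 1) from (Finset.Ico_add_one_right_eq_Icc 1 m).symm,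
      Finset.sum_Ico_eq_sum_range]
    simp
  -- bound on partial sums
  have hTle : ∀ j ∈ Finset.Icc 1 n, ‖T j‖ ≤ (j : ℝ) * M := by
    intro j hj
    have hj1 : 1 ≤ j := (Finset.mem_Icc.mp hj).1
    have hjpos : (0 : ℝ) < (j : ℝ) := by exact_mod_cast hj1
    have hsup : ‖(j : ℝ)⁻¹ • ∑ k ∈ Finset.Icc 1 j, S k‖ ≤ M :=
      Finset.le_sup' (fun j : ℕ => ‖(j : ℝ)⁻¹ • ∑ k ∈ Finset.Icc 1 j, S k‖) hj
    rw [norm_smul, norm_inv, Real.norm_natCast] at hsup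
    rw [hTIcc]
    calc ‖∑ k ∈ Finset.Icc 1 j, S k‖
        = (j : ℝ) * ((j : ℝ)⁻¹ * ‖∑ k ∈ Finset.Icc 1 j, S k‖) := by
          field_simp
      _ ≤ (j : ℝ) * M := by
          exact mul_le_mul_of_nonneg_left hsup (le_of_lt hjpos)
  -- positivity of Q_n
  have hQpos : 0 < ∑ k ∈ Finset.range n, q k := by
    apply Finset.sum_pos'
    · intro i _; exact hnn i
    · exact ⟨0, Finset.mem_range.mpr (by omega), hq0⟩
  -- rewrite the inner sum as a range sum and apply Abel
  have hshift : ∑ k ∈ Finset.Icc 1 n, q (n - k) • S k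
      = ∑ i ∈ Finset.range n, (fun i => q (n - 1 - i)) i • (fun i => S (1 + i)) i := by
    rw [show Finset.Icc 1 n = Finset.Ico 1 (n + 1) from (Finset.Ico_add_one_right_eq_Icc 1 n).symm,
      Finset.sum_Ico_eq_sum_range]
    simp only [Nat.add_sub_cancel]
    apply Finset.sum_congr rfl
    intro i _
    congr 2
    omega
  rw [hshift, Finset.sum_range_by_parts]
  -- norm bound
  have hb : ‖q (n - 1 - (n - 1)) • T n -
      ∑ i ∈ Finset.range (n - 1), (q (n - 1 - (i + 1)) - q (n - 1 - i)) • T (i + 1)‖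
      ≤ (∑ k ∈ Finset.range n, q k) * M := by
    have hq00 : n - 1 - (n - 1) = 0 := by omega
    rw [hq00]
    calc ‖q 0 • T n - ∑ i ∈ Finset.range (n - 1), (q (n - 1 - (i + 1)) - q (n - 1 - i)) • T (i + 1)‖
        ≤ ‖q 0 • T n‖ + ‖∑ i ∈ Finset.range (n - 1), (q (n - 1 - (i + 1)) - q (n - 1 - i)) • T (i + 1)‖ :=
          norm_sub_le _ _
      _ ≤ q 0 * ((n : ℝ) * M) + ∑ i ∈ Finset.range (n - 1), (q (n - 1 - i) - q (n - 1 - (i + 1))) * ((i + 1 : ℕ) : ℝ) * M := by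
          gcongr
          · rw [norm_smul, Real.norm_eq_abs, abs_of_nonneg (hnn 0)]
            exact mul_le_mul_of_nonneg_left (hTle n (Finset.mem_Icc.mpr ⟨hn, le_refl n⟩)) (hnn 0)
          · refine le_trans (norm_sum_le _ _) (Finset.sum_le_sum ?_)
            intro i hi
            have hi' : i < n - 1 := Finset.mem_range.mp hi
            have hmon : q (n - 1 - (i + 1)) ≤ q (n - 1 - i) := hmono (by omega)
            rw [norm_smul, Real.norm_eq_abs, abs_of_nonpos (by linarith), neg_sub]
            rw [mul_assoc]
            apply mul_le_mul_of_nonneg_left _ (by linarith)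
            exact hTle (i + 1) (Finset.mem_Icc.mpr ⟨by omega, by omega⟩)
      _ = (q 0 * n + ∑ i ∈ Finset.range (n - 1), (q (n - 1 - i) - q (n - 1 - (i + 1))) * ((i + 1 : ℕ) : ℝ)) * M := by
          rw [add_mul, Finset.sum_mul]; ring
      _ = (∑ k ∈ Finset.range n, q k) * M := by
          congr 1
          -- reflect the sum and apply the key lemma
          have hrefl : ∑ i ∈ Finset.range (n - 1), (q (n - 1 - i) - q (n - 1 - (i + 1))) * ((i + 1 : ℕ) : ℝ)
              = ∑ j ∈ Finset.range (n - 1), (q (j + 1) - q j) * (((n - 1) - j : ℕ) : ℝ) := by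
            rw [← Finset.sum_range_reflect (fun j => (q (j + 1) - q j) * (((n - 1) - j : ℕ) : ℝ)) (n - 1)]
            apply Finset.sum_congr rfl
            intro i hi
            have hi' : i < n - 1 := Finset.mem_range.mp hi
            have e1 : n - 1 - 1 - i + 1 = n - 1 - i := by omega
            have e2 : n - 1 - (n - 1 - 1 - i) = i + 1 := by omega
            have e3 : n - 1 - (i + 1) = n - 1 - 1 - i := by omega
            rw [e1, e2, e3]
          rw [hrefl, norlund_key]
          have : n - 1 + 1 = n := by omega
          rw [this]
          rw [Nat.cast_sub hn]
          push_cast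
          ring
  rw [norm_smul, norm_inv, Real.norm_eq_abs, abs_of_pos hQpos]
  calc (∑ k ∈ Finset.range n, q k)⁻¹ * ‖q (n - 1 - (n - 1)) • T n -
      ∑ i ∈ Finset.range (n - 1), (q (n - 1 - (i + 1)) - q (n - 1 - i)) • T (i + 1)‖
      ≤ (∑ k ∈ Finset.range n, q k)⁻¹ * ((∑ k ∈ Finset.range n, q k) * M) :=
        mul_le_mul_of_nonneg_left hb (le_of_lt (inv_pos.mpr hQpos))
    _ = M := by field_simp
    _ ≤ 2 * M := by linarith
end
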